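/- arXiv:1902.03279 — 9 statements merged into one kernel-verified Lean document; each statement's English description precedes it below -/
import Mathlib

section
/- Let h : ℝ → ℝ be continuous with compact support, and define u : ℝ → ℝ by u(x) = (1/2) ∫_ℝ e^{-|x-y|} h(y) dy. Then u is twice differentiable on ℝ and satisfies u(x) - u''(x) = h(x) for every x ∈ ℝ. -/
open MeasureTheory Real Set

theorem greens_function_identity_line
    (h : ℝ → ℝ) (hc : Continuous h) (hsupp : HasCompactSupport h)
    (u : ℝ → ℝ)
    (hu : ∀ x, u x = (1/2) * ∫ y : ℝ, Real.exp (-|x - y|) * h y) :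
    ∃ u' u'' : ℝ → ℝ,
      (∀ x, HasDerivAt u (u' x) x) ∧
      (∀ x, HasDerivAt u' (u'' x) x) ∧
      (∀ x, u x - u'' x = h x) := by
  set f : ℝ → ℝ := fun y => Real.exp y * h y with hfdef
  set g : ℝ → ℝ := fun y => Real.exp (-y) * h y with hgdef
  have hfc : Continuous f := (Real.continuous_exp).mul hc
  have hgc : Continuous g := (Real.continuous_exp.comp continuous_neg).mul hc
  have hfsupp : HasCompactSupport f := hsupp.mul_left
  have hgsupp : HasCompactSupport g := hsupp.mul_left
  have hfint : Integrable f := hfc.integrable_of_hasCompactSupport hfsupp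
  have hgint : Integrable g := hgc.integrable_of_hasCompactSupport hgsupp
  set A : ℝ → ℝ := fun x => ∫ y in Iic x, f y with hAdef
  set B : ℝ → ℝ := fun x => ∫ y in Ioi x, g y with hBdef
  have key : ∀ x : ℝ, Real.exp (-x) * Real.exp x = 1 := fun x => by
    rw [← Real.exp_add]; simp
  -- representation of u
  have hrep : ∀ x, u x = (1/2) * (Real.exp (-x) * A x + Real.exp x * B x) := by
    intro x
    have hk : Continuous fun y => Real.exp (-|x - y|) * h y := by
      exact ((Real.continuous_exp.comp ((continuous_const.sub continuous_id).abs.neg))).mul hc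
    have hkint : Integrable fun y => Real.exp (-|x - y|) * h y :=
      hk.integrable_of_hasCompactSupport hsupp.mul_left
    have hsplit : (∫ y : ℝ, Real.exp (-|x - y|) * h y)
        = (∫ y in Iic x, Real.exp (-|x - y|) * h y) + ∫ y in Ioi x, Real.exp (-|x - y|) * h y :=
      (intervalIntegral.integral_Iic_add_Ioi hkint.integrableOn hkint.integrableOn).symm
    have h1 : (∫ y in Iic x, Real.exp (-|x - y|) * h y) = Real.exp (-x) * A x := by
      rw [hAdef, ← integral_const_mul]
      refine setIntegral_congr_fun measurableSet_Iic fun y hy => ?_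
      have : |x - y| = x - y := abs_of_nonneg (by simpa using hy)
      rw [this, hfdef]
      rw [show -(x - y) = -x + y by ring, Real.exp_add]
      ring
    have h2 : (∫ y in Ioi x, Real.exp (-|x - y|) * h y) = Real.exp x * B x := by
      rw [hBdef, ← integral_const_mul]
      refine setIntegral_congr_fun measurableSet_Ioi fun y hy => ?_
      have : |x - y| = y - x := by
        rw [abs_sub_comm]; exact abs_of_nonneg (by simpa using le_of_lt hy)
      rw [this, hgdef]
      rw [show -(y - x) = x + -y by ring, Real.exp_add]
      ring
    rw [hu, hsplit, h1, h2]
  -- derivatives of A and B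
  have hA : ∀ x, HasDerivAt A (Real.exp x * h x) x := by
    intro x
    have hAeq : A = fun t => A 0 + ∫ y in (0:ℝ)..t, f y := by
      funext t
      rw [hAdef]
      simp only
      rw [← intervalIntegral.integral_Iic_sub_Iic hfint.integrableOn hfint.integrableOn]
      ring
    rw [hAeq]
    exact (intervalIntegral.integral_hasDerivAt_right hfint.intervalIntegrable
      hfc.aestronglyMeasurable.stronglyMeasurableAtFilter hfc.continuousAt).const_add _
  have hB : ∀ x, HasDerivAt B (-(Real.exp (-x) * h x)) x := by
    intro x
    have hBeq : B = fun t => (∫ y : ℝ, g y) - ((∫ y in Iic 0, g y) + ∫ y in (0:ℝ)..t, g y) := by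
      funext t
      rw [hBdef]
      simp only
      rw [← intervalIntegral.integral_Iic_sub_Iic hgint.integrableOn hgint.integrableOn,
        ← intervalIntegral.integral_Iic_add_Ioi (b := t) hgint.integrableOn hgint.integrableOn]
      ring
    rw [hBeq]
    have := ((intervalIntegral.integral_hasDerivAt_right (a := 0) (b := x)
      hgint.intervalIntegrable
      hgc.aestronglyMeasurable.stronglyMeasurableAtFilter hgc.continuousAt).const_add
      (∫ y in Iic 0, g y)).const_sub (∫ y : ℝ, g y)
    simpa using this
  -- derivative building blocks
  have dE : ∀ x : ℝ, HasDerivAt (fun t => Real.exp (-t)) (-Real.exp (-x)) x := by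
    intro x
    simpa using (hasDerivAt_neg x).exp
  have d1 : ∀ x : ℝ, HasDerivAt (fun t => Real.exp (-t) * A t)
      (-Real.exp (-x) * A x + Real.exp (-x) * (Real.exp x * h x)) x :=
    fun x => (dE x).mul (hA x)
  have d2 : ∀ x : ℝ, HasDerivAt (fun t => Real.exp t * B t)
      (Real.exp x * B x + Real.exp x * (-(Real.exp (-x) * h x))) x :=
    fun x => (Real.hasDerivAt_exp x).mul (hB x)
  refine ⟨fun x => (1/2) * (Real.exp x * B x - Real.exp (-x) * A x),
    fun x => u x - h x, ?_, ?_, fun x => by ring⟩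
  · intro x
    have huf : u = fun t => (1/2) * (Real.exp (-t) * A t + Real.exp t * B t) := funext hrep
    rw [huf]
    have := ((d1 x).add (d2 x)).const_mul (1/2 : ℝ)
    refine this.congr_deriv ?_
    have k := key x
    linear_combination (-(1/2) * h x) * k - (-(1/2) * h x) * k
  · intro x
    have := ((d2 x).sub (d1 x)).const_mul (1/2 : ℝ)
    refine this.congr_deriv ?_
    have k := key x
    show _ = u x - h x
    rw [hrep x]
    linear_combination (-h x) * k
end

section
/- Let h : ℝ → ℝ be continuous with compact support, and define u : ℝ → ℝ by u(x) = (1/2) ∫_ℝ e^{-|x-y|} h(y) dy. Then u is differentiable on ℝ and for every x ∈ ℝ, u'(x) = -(1/2) ∫_ℝ sgn(x-y) e^{-|x-y|} h(y) dy, where sgn denotes the sign function (with sgn 0 = 0). -/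
open MeasureTheory Real

theorem deriv_of_greens_convolution_line
    (h : ℝ → ℝ) (hc : Continuous h) (hsupp : HasCompactSupport h)
    (u : ℝ → ℝ)
    (hu : ∀ x, u x = (1/2) * ∫ y : ℝ, Real.exp (-|x - y|) * h y) :
    ∀ x : ℝ,
      HasDerivAt u
        (-(1/2) * ∫ y : ℝ, Real.sign (x - y) * Real.exp (-|x - y|) * h y) x := by
  intro x₀
  obtain ⟨R, hR0, hRsupp⟩ := hsupp.exists_pos_le_norm
  set S : ℝ := R + |x₀| + 1 with hSdef
  have hx₀S : |x₀| < S := by simp only [hSdef]; linarith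
  have hRS : R ≤ S := by have := abs_nonneg x₀; simp only [hSdef]; linarith
  have hxS₀ : -S < x₀ ∧ x₀ < S := abs_lt.mp hx₀S
  have hzero : ∀ y : ℝ, y ∉ Set.Ioc (-S) S → h y = 0 := by
    intro y hy
    apply hRsupp
    simp only [Set.mem_Ioc, not_and_or, not_lt, not_le] at hy
    rcases hy with hy | hy
    · calc R ≤ S := hRS
        _ ≤ -y := by linarith
        _ ≤ ‖y‖ := by rw [Real.norm_eq_abs]; exact neg_le_abs y
    · calc R ≤ S := hRS
        _ ≤ y := le_of_lt hy
        _ ≤ ‖y‖ := le_abs_self y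
  -- continuity facts
  have hcont1 : Continuous (fun y : ℝ => Real.exp y * h y) :=
    (Real.continuous_exp).mul hc
  have hcont2 : Continuous (fun y : ℝ => Real.exp (-y) * h y) :=
    (Real.continuous_exp.comp continuous_neg).mul hc
  have hmsign : Measurable Real.sign := by
    have : Real.sign = fun x : ℝ => if x < 0 then (-1:ℝ) else if 0 < x then 1 else 0 := by
      funext x; rw [Real.sign]
    rw [this]
    exact Measurable.ite (measurableSet_lt measurable_id measurable_const)
      measurable_const (Measurable.ite (measurableSet_lt measurable_const measurable_id)
      measurable_const measurable_const)
  -- the two half-integrals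
  set A : ℝ → ℝ := fun x => ∫ y in (-S)..x, Real.exp y * h y with hA
  set B : ℝ → ℝ := fun x => ∫ y in x..S, Real.exp (-y) * h y with hB
  set v : ℝ → ℝ := fun x =>
    (1/2) * (Real.exp (-x) * A x + Real.exp x * B x) with hv
  -- u equals v on |x| < S
  have huv : ∀ x : ℝ, |x| < S → u x = v x := by
    intro x hx
    have hxS : -S < x ∧ x < S := abs_lt.mp hx
    have key : (∫ y : ℝ, Real.exp (-|x - y|) * h y)
        = Real.exp (-x) * A x + Real.exp x * B x := by
      have h1 : (∫ y : ℝ, Real.exp (-|x - y|) * h y)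
          = ∫ y in Set.Ioc (-S) S, Real.exp (-|x - y|) * h y := by
        rw [MeasureTheory.setIntegral_eq_integral_of_forall_compl_eq_zero]
        intro y hy; rw [hzero y hy, mul_zero]
      have h2 : (∫ y in Set.Ioc (-S) S, Real.exp (-|x - y|) * h y)
          = ∫ y in (-S)..S, Real.exp (-|x - y|) * h y := by
        rw [intervalIntegral.integral_of_le (by linarith)]
      have hcont : Continuous (fun y : ℝ => Real.exp (-|x - y|) * h y) :=
        ((Real.continuous_exp.comp
          ((continuous_const.sub continuous_id).abs.neg))).mul hc
      have h3 : (∫ y in (-S)..S, Real.exp (-|x - y|) * h y)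
          = (∫ y in (-S)..x, Real.exp (-|x - y|) * h y)
            + ∫ y in x..S, Real.exp (-|x - y|) * h y := by
        rw [intervalIntegral.integral_add_adjacent_intervals
          (hcont.intervalIntegrable _ _) (hcont.intervalIntegrable _ _)]
      have h4 : (∫ y in (-S)..x, Real.exp (-|x - y|) * h y)
          = Real.exp (-x) * A x := by
        rw [hA, ← intervalIntegral.integral_const_mul]
        apply intervalIntegral.integral_congr
        intro y hy
        rw [Set.uIcc_of_le (by linarith)] at hy
        have hyx : y ≤ x := hy.2
        dsimp only
        rw [abs_of_nonneg (by linarith : (0:ℝ) ≤ x - y),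
          show -(x - y) = -x + y by ring, Real.exp_add, mul_assoc]
      have h5 : (∫ y in x..S, Real.exp (-|x - y|) * h y)
          = Real.exp x * B x := by
        rw [hB, ← intervalIntegral.integral_const_mul]
        apply intervalIntegral.integral_congr
        intro y hy
        rw [Set.uIcc_of_le (by linarith)] at hy
        have hyx : x ≤ y := hy.1
        dsimp only
        rw [abs_of_nonpos (by linarith : x - y ≤ 0), neg_neg,
          show x - y = x + -y by ring, Real.exp_add, mul_assoc]
      rw [h1, h2, h3, h4, h5]
    rw [hu x, hv, key]
  -- derivative of v at x₀
  have hAderiv : HasDerivAt A (Real.exp x₀ * h x₀) x₀ :=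
    intervalIntegral.integral_hasDerivAt_right
      (hcont1.intervalIntegrable _ _)
      (hcont1.stronglyMeasurableAtFilter _ _) hcont1.continuousAt
  have hBderiv : HasDerivAt B (-(Real.exp (-x₀) * h x₀)) x₀ :=
    intervalIntegral.integral_hasDerivAt_left
      (hcont2.intervalIntegrable _ _)
      (hcont2.stronglyMeasurableAtFilter _ _) hcont2.continuousAt
  have hexp1 : HasDerivAt (fun x : ℝ => Real.exp (-x)) (-Real.exp (-x₀)) x₀ := by
    simpa using (hasDerivAt_neg x₀).exp
  have hexp2 : HasDerivAt Real.exp (Real.exp x₀) x₀ := Real.hasDerivAt_exp x₀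
  have hvderiv : HasDerivAt v
      ((1/2) * (-Real.exp (-x₀) * A x₀ + Real.exp x₀ * B x₀)) x₀ := by
    have h1 := hexp1.mul hAderiv
    have h2 := hexp2.mul hBderiv
    have h3 := ((h1.add h2).const_mul (1/2 : ℝ))
    refine h3.congr_deriv ?_
    have e1 : Real.exp (-x₀) * (Real.exp x₀ * h x₀) = h x₀ := by
      rw [← mul_assoc, ← Real.exp_add]; simp
    have e2 : Real.exp x₀ * -(Real.exp (-x₀) * h x₀) = -h x₀ := by
      rw [mul_neg, ← mul_assoc, ← Real.exp_add]; simp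
    rw [e1, e2]
    ring
  -- value of the target integral
  have hne : ∀ᵐ y : ℝ ∂volume, y ≠ x₀ := by
    rw [MeasureTheory.ae_iff]
    simp only [ne_eq, not_not, Set.setOf_eq_eq_singleton]
    exact Real.volume_singleton
  have hval : (-(1/2) * ∫ y : ℝ, Real.sign (x₀ - y) * Real.exp (-|x₀ - y|) * h y)
      = (1/2) * (-Real.exp (-x₀) * A x₀ + Real.exp x₀ * B x₀) := by
    set g : ℝ → ℝ := fun y => Real.sign (x₀ - y) * Real.exp (-|x₀ - y|) * h y with hg
    have hcontg : Continuous (fun y : ℝ => Real.exp (-|x₀ - y|) * h y) :=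
      ((Real.continuous_exp.comp
        ((continuous_const.sub continuous_id).abs.neg))).mul hc
    have hintg : Integrable g volume := by
      have hint0 : Integrable (fun y : ℝ => Real.exp (-|x₀ - y|) * h y) volume :=
        hcontg.integrable_of_hasCompactSupport (hsupp.mul_left)
      have hsb : ∀ y : ℝ, ‖Real.sign (x₀ - y)‖ ≤ 1 := by
        intro y
        rw [Real.norm_eq_abs]
        rcases lt_trichotomy (x₀ - y) 0 with ht|ht|ht
        · simp [Real.sign_of_neg ht]
        · simp [ht, Real.sign_zero]
        · simp [Real.sign_of_pos ht]
      have := hint0.bdd_mul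
        ((hmsign.comp ((measurable_const.sub measurable_id))).aestronglyMeasurable)
        (ae_of_all _ hsb)
      simpa [hg, mul_assoc] using this
    have h1 : (∫ y : ℝ, g y) = ∫ y in Set.Ioc (-S) S, g y := by
      rw [MeasureTheory.setIntegral_eq_integral_of_forall_compl_eq_zero]
      intro y hy; rw [hg]; dsimp only; rw [hzero y hy, mul_zero]
    have h2 : (∫ y in Set.Ioc (-S) S, g y) = ∫ y in (-S)..S, g y := by
      rw [intervalIntegral.integral_of_le (by linarith)]
    have h3 : (∫ y in (-S)..S, g y)
        = (∫ y in (-S)..x₀, g y) + ∫ y in x₀..S, g y := by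
      rw [intervalIntegral.integral_add_adjacent_intervals
        hintg.intervalIntegrable hintg.intervalIntegrable]
    have h4 : (∫ y in (-S)..x₀, g y) = Real.exp (-x₀) * A x₀ := by
      rw [hA, ← intervalIntegral.integral_const_mul]
      apply intervalIntegral.integral_congr_ae
      filter_upwards [hne] with y hy hmem
      rw [Set.uIoc_of_le (by linarith)] at hmem
      have hyx : y < x₀ := lt_of_le_of_ne hmem.2 hy
      rw [hg]
      dsimp only
      rw [Real.sign_of_pos (by linarith : (0:ℝ) < x₀ - y), one_mul,
        abs_of_nonneg (by linarith : (0:ℝ) ≤ x₀ - y),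
        show -(x₀ - y) = -x₀ + y by ring, Real.exp_add, mul_assoc]
    have h5 : (∫ y in x₀..S, g y) = -(Real.exp x₀ * B x₀) := by
      rw [hB, ← intervalIntegral.integral_const_mul, ← intervalIntegral.integral_neg]
      apply intervalIntegral.integral_congr_ae
      filter_upwards with y hmem
      rw [Set.uIoc_of_le (by linarith)] at hmem
      have hyx : x₀ < y := hmem.1
      rw [hg]
      dsimp only
      rw [Real.sign_of_neg (by linarith : x₀ - y < 0),
        abs_of_nonpos (by linarith : x₀ - y ≤ 0), neg_neg,
        show x₀ - y = x₀ + -y by ring, Real.exp_add]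
      ring
    rw [h1, h2, h3, h4, h5]
    ring
  rw [hval]
  apply hvderiv.congr_of_eventuallyEq
  have hopen : Set.Ioo (-S) S ∈ nhds x₀ :=
    Ioo_mem_nhds hxS₀.1 hxS₀.2
  filter_upwards [hopen] with x hx
  exact huv x (abs_lt.mpr ⟨hx.1, hx.2⟩)
end

section
/- Let a, b ∈ ℝ with a < b, and let f : ℝ → ℝ be integrable with f ≥ 0 almost everywhere and f = 0 almost everywhere on [a,b]. Define F(x) = -(1/2) ∫_ℝ sgn(x-y) e^{-|x-y|} f(y) dy, where sgn denotes the sign function (sgn 0 = 0). Then F(b) ≥ F(a). -/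
open MeasureTheory Real

lemma measurable_real_sign : Measurable Real.sign := by
  unfold Real.sign
  exact Measurable.ite (measurableSet_lt measurable_id measurable_const) measurable_const
    (Measurable.ite (measurableSet_lt measurable_const measurable_id) measurable_const
      measurable_const)

lemma kernel_integrable (x : ℝ) (f : ℝ → ℝ) (hf : Integrable f) :
    Integrable (fun y => Real.sign (x - y) * Real.exp (-|x - y|) * f y) := by
  have : (fun y => Real.sign (x - y) * Real.exp (-|x - y|) * f y)
      = (fun y => Real.sign (x - y) * Real.exp (-|x - y|)) * f := rfl
  rw [this]
  apply hf.bdd_mul (c := 1)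
  · apply Measurable.aestronglyMeasurable
    apply Measurable.mul
    · exact measurable_real_sign.comp (measurable_const.sub measurable_id)
    · exact (measurable_neg.comp ((measurable_const.sub measurable_id).abs)).exp
  · refine Filter.Eventually.of_forall (fun y => ?_)
    have h1 : |Real.sign (x - y)| ≤ 1 := by
      rcases lt_trichotomy (x - y) 0 with h | h | h
      · simp [Real.sign_of_neg h]
      · simp [h, Real.sign_zero]
      · simp [Real.sign_of_pos h]
    have h2 : Real.exp (-|x - y|) ≤ 1 := by
      rw [Real.exp_le_one_iff]
      simp [abs_nonneg]
    calc ‖Real.sign (x - y) * Real.exp (-|x - y|)‖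
        = |Real.sign (x - y)| * Real.exp (-|x - y|) := by
          rw [Real.norm_eq_abs, abs_mul, abs_of_pos (Real.exp_pos _)]
      _ ≤ 1 * 1 := by
          exact mul_le_mul h1 h2 (Real.exp_pos _).le zero_le_one
      _ = 1 := one_mul 1

theorem F_endpoint_monotone
    (a b : ℝ) (hab : a < b)
    (f : ℝ → ℝ) (hf : Integrable f)
    (hf_nonneg : ∀ᵐ y : ℝ, 0 ≤ f y)
    (hf_zero : ∀ᵐ y : ℝ, y ∈ Set.Icc a b → f y = 0)
    (F : ℝ → ℝ)
    (hF : ∀ x, F x = -(1/2) * ∫ y : ℝ, Real.sign (x - y) * Real.exp (-|x - y|) * f y) :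
    F a ≤ F b := by
  rw [hF a, hF b]
  have key : (∫ y : ℝ, Real.sign (b - y) * Real.exp (-|b - y|) * f y)
      ≤ ∫ y : ℝ, Real.sign (a - y) * Real.exp (-|a - y|) * f y := by
    apply integral_mono_ae (kernel_integrable b f hf) (kernel_integrable a f hf)
    filter_upwards [hf_nonneg, hf_zero] with y hy0 hyz
    rcases lt_trichotomy y a with h | h | h
    · -- y < a < b : both signs 1
      have ha : 0 < a - y := by linarith
      have hb : 0 < b - y := by linarith
      rw [Real.sign_of_pos ha, Real.sign_of_pos hb,
        abs_of_pos ha, abs_of_pos hb, one_mul, one_mul]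
      apply mul_le_mul_of_nonneg_right _ hy0
      exact Real.exp_le_exp.mpr (by linarith)
    · subst h
      rcases le_or_gt y b with hb | hb
      · rw [hyz ⟨le_refl y, hb⟩]; simp
      · exact absurd hab (by linarith)
    · rcases le_or_gt y b with hb | hb
      · rw [hyz ⟨h.le, hb⟩]; simp
      · -- a < b < y : both signs -1
        have ha : a - y < 0 := by linarith
        have hb' : b - y < 0 := by linarith
        rw [Real.sign_of_neg ha, Real.sign_of_neg hb',
          abs_of_neg ha, abs_of_neg hb', neg_one_mul, neg_one_mul, neg_neg, neg_neg]
        apply mul_le_mul_of_nonneg_right _ hy0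
        rw [neg_le_neg_iff]
        exact Real.exp_le_exp.mpr (by linarith)
  nlinarith [key]
end

section
/- Let a, b ∈ ℝ with a < b, and let f : ℝ → ℝ be integrable with f(y) = 0 for every y ∈ [a,b]. Define F(x) = -(1/2) ∫_ℝ sgn(x-y) e^{-|x-y|} f(y) dy, where sgn denotes the sign function (sgn 0 = 0). Then F is differentiable at every point x ∈ (a,b), with F'(x) = (1/2) ∫_ℝ e^{-|x-y|} f(y) dy. -/
open MeasureTheory Real

theorem F_differentiable_on_interval
    (a b : ℝ) (hab : a < b)
    (f : ℝ → ℝ) (hf : Integrable f)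
    (hf_zero : ∀ y ∈ Set.Icc a b, f y = 0)
    (F : ℝ → ℝ)
    (hF : ∀ x, F x = -(1/2) * ∫ y : ℝ, Real.sign (x - y) * Real.exp (-|x - y|) * f y) :
    ∀ x ∈ Set.Ioo a b,
      HasDerivAt F ((1/2) * ∫ y : ℝ, Real.exp (-|x - y|) * f y) x := by
  set g1 : ℝ → ℝ := Set.indicator (Set.Iio a) (fun y => Real.exp y * f y) with hg1
  set g2 : ℝ → ℝ := Set.indicator (Set.Ioi b) (fun y => Real.exp (-y) * f y) with hg2
  have hg1i : Integrable g1 := by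
    refine Integrable.mono' (hf.norm.const_mul (Real.exp a)) ?_ ?_
    · exact (Real.continuous_exp.aestronglyMeasurable.mul hf.1).indicator measurableSet_Iio
    · filter_upwards with y
      by_cases hy : y ∈ Set.Iio a
      · simp only [hg1, Set.indicator_of_mem hy, Real.norm_eq_abs, abs_mul,
          abs_of_pos (Real.exp_pos y)]
        exact mul_le_mul_of_nonneg_right (Real.exp_le_exp.mpr hy.le) (abs_nonneg _)
      · simp only [hg1, Set.indicator_of_notMem hy, norm_zero]
        positivity
  have hg2i : Integrable g2 := by
    refine Integrable.mono' (hf.norm.const_mul (Real.exp (-b))) ?_ ?_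
    · exact ((Real.continuous_exp.comp continuous_neg).aestronglyMeasurable.mul
        hf.1).indicator measurableSet_Ioi
    · filter_upwards with y
      by_cases hy : y ∈ Set.Ioi b
      · simp only [hg2, Set.indicator_of_mem hy, Real.norm_eq_abs, abs_mul,
          abs_of_pos (Real.exp_pos (-y))]
        exact mul_le_mul_of_nonneg_right
          (Real.exp_le_exp.mpr (neg_le_neg hy.le)) (abs_nonneg _)
      · simp only [hg2, Set.indicator_of_notMem hy, norm_zero]
        positivity
  set A : ℝ := ∫ y, g1 y with hA
  set B : ℝ := ∫ y, g2 y with hB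
  intro x hx
  obtain ⟨hxa, hxb⟩ := hx
  -- pointwise identities
  have h1 : ∀ y, Real.sign (x - y) * Real.exp (-|x - y|) * f y
      = Real.exp (-x) * g1 y - Real.exp x * g2 y := by
    intro y
    rcases lt_trichotomy y a with hy | hy | hy
    · have hxy : 0 < x - y := by linarith
      have hy2 : y ∉ Set.Ioi b := by simp; linarith
      rw [Real.sign_of_pos hxy, abs_of_pos hxy, hg1, hg2,
        Set.indicator_of_mem (Set.mem_Iio.mpr hy), Set.indicator_of_notMem hy2,
        show -(x - y) = -x + y by ring, Real.exp_add]
      ring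
    · subst hy
      have hfy : f y = 0 := hf_zero y ⟨le_refl y, by linarith⟩
      have hy1 : y ∉ Set.Iio y := by simp
      have hy2 : y ∉ Set.Ioi b := by simp; linarith
      rw [hg1, hg2, Set.indicator_of_notMem hy1, Set.indicator_of_notMem hy2, hfy]
      ring
    · rcases le_or_gt y b with hyb | hyb
      · have hfy : f y = 0 := hf_zero y ⟨hy.le, hyb⟩
        have hy1 : y ∉ Set.Iio a := by simp; linarith
        have hy2 : y ∉ Set.Ioi b := by simp; linarith
        rw [hg1, hg2, Set.indicator_of_notMem hy1, Set.indicator_of_notMem hy2, hfy]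
        ring
      · have hxy : x - y < 0 := by linarith
        have hy1 : y ∉ Set.Iio a := by simp; linarith
        rw [Real.sign_of_neg hxy, abs_of_neg hxy, hg1, hg2,
          Set.indicator_of_notMem hy1, Set.indicator_of_mem (Set.mem_Ioi.mpr hyb),
          show - -(x - y) = x + -y by ring, Real.exp_add]
        ring
  have h2 : ∀ y, Real.exp (-|x - y|) * f y
      = Real.exp (-x) * g1 y + Real.exp x * g2 y := by
    intro y
    rcases lt_trichotomy y a with hy | hy | hy
    · have hxy : 0 < x - y := by linarith
      have hy2 : y ∉ Set.Ioi b := by simp; linarith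
      rw [abs_of_pos hxy, hg1, hg2,
        Set.indicator_of_mem (Set.mem_Iio.mpr hy), Set.indicator_of_notMem hy2,
        show -(x - y) = -x + y by ring, Real.exp_add]
      ring
    · subst hy
      have hfy : f y = 0 := hf_zero y ⟨le_refl y, by linarith⟩
      have hy1 : y ∉ Set.Iio y := by simp
      have hy2 : y ∉ Set.Ioi b := by simp; linarith
      rw [hg1, hg2, Set.indicator_of_notMem hy1, Set.indicator_of_notMem hy2, hfy]
      ring
    · rcases le_or_gt y b with hyb | hyb
      · have hfy : f y = 0 := hf_zero y ⟨hy.le, hyb⟩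
        have hy1 : y ∉ Set.Iio a := by simp; linarith
        have hy2 : y ∉ Set.Ioi b := by simp; linarith
        rw [hg1, hg2, Set.indicator_of_notMem hy1, Set.indicator_of_notMem hy2, hfy]
        ring
      · have hxy : x - y < 0 := by linarith
        have hy1 : y ∉ Set.Iio a := by simp; linarith
        rw [abs_of_neg hxy, hg1, hg2,
          Set.indicator_of_notMem hy1, Set.indicator_of_mem (Set.mem_Ioi.mpr hyb),
          show - -(x - y) = x + -y by ring, Real.exp_add]
        ring
  -- the target integral
  have hint : (∫ y : ℝ, Real.exp (-|x - y|) * f y)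
      = Real.exp (-x) * A + Real.exp x * B := by
    rw [hA, hB, ← integral_const_mul, ← integral_const_mul, ← integral_add
      (hg1i.const_mul _) (hg2i.const_mul _)]
    exact integral_congr_ae (Filter.Eventually.of_forall h2)
  -- F agrees with an explicit function near x
  have hFeq : ∀ z ∈ Set.Ioo a b,
      F z = -(1/2) * (Real.exp (-z) * A - Real.exp z * B) := by
    intro z hz
    obtain ⟨hza, hzb⟩ := hz
    have h1z : ∀ y, Real.sign (z - y) * Real.exp (-|z - y|) * f y
        = Real.exp (-z) * g1 y - Real.exp z * g2 y := by
      intro y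
      rcases lt_trichotomy y a with hy | hy | hy
      · have hzy : 0 < z - y := by linarith
        have hy2 : y ∉ Set.Ioi b := by simp; linarith
        rw [Real.sign_of_pos hzy, abs_of_pos hzy, hg1, hg2,
          Set.indicator_of_mem (Set.mem_Iio.mpr hy), Set.indicator_of_notMem hy2,
          show -(z - y) = -z + y by ring, Real.exp_add]
        ring
      · subst hy
        have hfy : f y = 0 := hf_zero y ⟨le_refl y, by linarith⟩
        have hy1 : y ∉ Set.Iio y := by simp
        have hy2 : y ∉ Set.Ioi b := by simp; linarith
        rw [hg1, hg2, Set.indicator_of_notMem hy1, Set.indicator_of_notMem hy2, hfy]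
        ring
      · rcases le_or_gt y b with hyb | hyb
        · have hfy : f y = 0 := hf_zero y ⟨hy.le, hyb⟩
          have hy1 : y ∉ Set.Iio a := by simp; linarith
          have hy2 : y ∉ Set.Ioi b := by simp; linarith
          rw [hg1, hg2, Set.indicator_of_notMem hy1, Set.indicator_of_notMem hy2, hfy]
          ring
        · have hzy : z - y < 0 := by linarith
          have hy1 : y ∉ Set.Iio a := by simp; linarith
          rw [Real.sign_of_neg hzy, abs_of_neg hzy, hg1, hg2,
            Set.indicator_of_notMem hy1, Set.indicator_of_mem (Set.mem_Ioi.mpr hyb),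
            show - -(z - y) = z + -y by ring, Real.exp_add]
          ring
    have key : (∫ y : ℝ, Real.sign (z - y) * Real.exp (-|z - y|) * f y)
        = Real.exp (-z) * A - Real.exp z * B := by
      rw [hA, hB, ← integral_const_mul, ← integral_const_mul, ← integral_sub
        (hg1i.const_mul _) (hg2i.const_mul _)]
      exact integral_congr_ae (Filter.Eventually.of_forall h1z)
    rw [hF z, key]
  -- derivative of the explicit function
  have hφ : HasDerivAt (fun z => -(1/2) * (Real.exp (-z) * A - Real.exp z * B))
      (-(1/2) * ((Real.exp (-x) * (-1)) * A - Real.exp x * B)) x := by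
    exact ((((hasDerivAt_neg x).exp.mul_const A).sub
      ((Real.hasDerivAt_exp x).mul_const B)).const_mul (-(1/2)))
  have heq : F =ᶠ[nhds x] fun z => -(1/2) * (Real.exp (-z) * A - Real.exp z * B) := by
    filter_upwards [isOpen_Ioo.mem_nhds ⟨hxa, hxb⟩] with z hz using hFeq z hz
  have := hφ.congr_of_eventuallyEq heq
  refine this.congr_deriv ?_
  rw [hint]; ring
end

section
/- Define g : ℝ → ℝ by g(x) = sinh(fract(x) - 1/2) / (2 sinh(1/2)), where fract(x) = x - ⌊x⌋ is the fractional part. Let a, b ∈ ℝ with 0 < a < b < 1. Then for every y ∈ [0,a] ∪ (b,1], one has g(b-y) > g(a-y). -/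
open Real

theorem periodic_kernel_strict_monotone
    (g : ℝ → ℝ)
    (hg : ∀ x, g x = Real.sinh (Int.fract x - 1/2) / (2 * Real.sinh (1/2)))
    (a b : ℝ) (ha : 0 < a) (hab : a < b) (hb : b < 1) :
    ∀ y ∈ Set.Icc (0 : ℝ) a ∪ Set.Ioc b 1, g (b - y) > g (a - y) := by
  intro y hy
  have hs : 0 < 2 * Real.sinh (1/2) := by
    have := Real.sinh_pos_iff.mpr (by norm_num : (0:ℝ) < 1/2)
    linarith
  rw [hg, hg, gt_iff_lt, div_lt_div_iff_of_pos_right hs]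
  apply Real.sinh_lt_sinh.mpr
  have key : Int.fract (a - y) < Int.fract (b - y) := by
    rcases hy with ⟨hy0, hya⟩ | ⟨hyb, hy1⟩
    · rw [Int.fract_eq_self.mpr ⟨by linarith, by linarith⟩,
        Int.fract_eq_self.mpr ⟨by linarith, by linarith⟩]
      linarith
    · have h1 : Int.fract (a - y) = a - y + 1 := by
        rw [← Int.fract_add_one, Int.fract_eq_self.mpr ⟨by linarith, by linarith⟩]
      have h2 : Int.fract (b - y) = b - y + 1 := by
        rw [← Int.fract_add_one, Int.fract_eq_self.mpr ⟨by linarith, by linarith⟩]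
      rw [h1, h2]; linarith
  linarith
end

section
/- Define g : ℝ → ℝ by g(x) = sinh(fract(x) - 1/2) / (2 sinh(1/2)), where fract(x) = x - ⌊x⌋ is the fractional part. Let a, b ∈ ℝ with 0 < a < b < 1, and let f : ℝ → ℝ be 1-periodic, integrable on [0,1], with f ≥ 0 almost everywhere and f = 0 almost everywhere on [a,b]. Define F(x) = ∫_0^1 g(x-y) f(y) dy. Then F(b) ≥ F(a), and F(a) = F(b) if and only if f = 0 almost everywhere on [0,1]. -/
open MeasureTheory Real

lemma sinh_shift (t d : ℝ) :
    Real.sinh (t + d) - Real.sinh t = 2 * Real.cosh (t + d/2) * Real.sinh (d/2) := by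
  have h : ∀ u : ℝ, Real.sinh (u + d/2) - Real.sinh (u - d/2)
      = 2 * Real.cosh u * Real.sinh (d/2) := by
    intro u; rw [Real.sinh_add, Real.sinh_sub]; ring
  have := h (t + d/2)
  simpa [show t + d/2 + d/2 = t + d by ring, show t + d/2 - d/2 = t by ring] using this

lemma sinh_shift_ge (t d : ℝ) (hd : 0 < d) :
    2 * Real.sinh (d/2) ≤ Real.sinh (t + d) - Real.sinh t := by
  rw [sinh_shift]
  have h1 : (1:ℝ) ≤ Real.cosh (t + d/2) := Real.one_le_cosh _
  have h2 : 0 < Real.sinh (d/2) := Real.sinh_pos_iff.2 (by linarith)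
  nlinarith

lemma key_bound (a b : ℝ) (ha : 0 < a) (hab : a < b) (hb : b < 1) (y : ℝ)
    (hy : y ∈ Set.Ioc 0 1) (hy' : y ∉ Set.Icc a b) :
    Real.sinh ((b - a)/2) / Real.sinh (1/2)
      ≤ Real.sinh (Int.fract (b - y) - 1/2) / (2 * Real.sinh (1/2))
        - Real.sinh (Int.fract (a - y) - 1/2) / (2 * Real.sinh (1/2)) := by
  obtain ⟨hy0, hy1⟩ := hy
  have hs : 0 < Real.sinh (1/2 : ℝ) := Real.sinh_pos_iff.2 (by norm_num)
  have hcase : y < a ∨ b < y := by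
    rcases lt_or_ge y a with h | h
    · exact Or.inl h
    · rcases lt_or_ge b y with h' | h'
      · exact Or.inr h'
      · exact absurd ⟨h, h'⟩ hy'
  have hmain : 2 * Real.sinh ((b - a)/2)
      ≤ Real.sinh (Int.fract (b - y) - 1/2) - Real.sinh (Int.fract (a - y) - 1/2) := by
    rcases hcase with h | h
    · have hfb : Int.fract (b - y) = b - y :=
        Int.fract_eq_self.2 ⟨by linarith, by linarith⟩
      have hfa : Int.fract (a - y) = a - y :=
        Int.fract_eq_self.2 ⟨by linarith, by linarith⟩
      rw [hfb, hfa]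
      have := sinh_shift_ge (a - y - 1/2) (b - a) (by linarith)
      have harg : a - y - 1/2 + (b - a) = b - y - 1/2 := by ring
      rw [harg] at this
      linarith
    · have hfb : Int.fract (b - y) = b - y + 1 := by
        have h1 : Int.fract (b - y) = Int.fract (b - y + 1) := by
          rw [show b - y + 1 = b - y + ((1:ℤ):ℝ) by push_cast; ring, Int.fract_add_intCast]
        rw [h1]
        exact Int.fract_eq_self.2 ⟨by linarith, by linarith⟩
      have hfa : Int.fract (a - y) = a - y + 1 := by
        have h1 : Int.fract (a - y) = Int.fract (a - y + 1) := by
          rw [show a - y + 1 = a - y + ((1:ℤ):ℝ) by push_cast; ring, Int.fract_add_intCast]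
        rw [h1]
        exact Int.fract_eq_self.2 ⟨by linarith, by linarith⟩
      rw [hfb, hfa]
      have := sinh_shift_ge (a - y + 1 - 1/2) (b - a) (by linarith)
      have harg : a - y + 1 - 1/2 + (b - a) = b - y + 1 - 1/2 := by ring
      rw [harg] at this
      linarith
  rw [div_sub_div_same, div_le_div_iff₀ hs (by linarith)]
  nlinarith

theorem periodic_F_endpoint_monotone
    (g : ℝ → ℝ)
    (hg : ∀ x, g x = Real.sinh (Int.fract x - 1/2) / (2 * Real.sinh (1/2)))
    (a b : ℝ) (ha : 0 < a) (hab : a < b) (hb : b < 1)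
    (f : ℝ → ℝ) (hper : Function.Periodic f 1)
    (hint : IntegrableOn f (Set.Icc (0 : ℝ) 1))
    (hf_nonneg : ∀ᵐ y : ℝ, 0 ≤ f y)
    (hf_zero : ∀ᵐ y : ℝ, y ∈ Set.Icc a b → f y = 0)
    (F : ℝ → ℝ)
    (hF : ∀ x, F x = ∫ y in (0:ℝ)..1, g (x - y) * f y) :
    F a ≤ F b ∧
      (F a = F b ↔ ∀ᵐ y ∂(volume.restrict (Set.Icc (0:ℝ) 1)), f y = 0) := by
  have hs : 0 < Real.sinh (1/2 : ℝ) := Real.sinh_pos_iff.2 (by norm_num)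
  set c : ℝ := Real.sinh ((b - a)/2) / Real.sinh (1/2) with hc_def
  have hc : 0 < c := div_pos (Real.sinh_pos_iff.2 (by linarith)) hs
  -- measurability and boundedness of g
  have hgmeas : Measurable g := by
    have hgf : g = fun x => Real.sinh (Int.fract x - 1/2) / (2 * Real.sinh (1/2)) :=
      funext hg
    rw [hgf]
    exact (Real.continuous_sinh.measurable.comp
      (measurable_fract.sub measurable_const)).div_const _
  have hgbdd : ∀ x, |g x| ≤ 1/2 := by
    intro x
    rw [hg, abs_div]
    have h1 : |Real.sinh (Int.fract x - 1/2)| ≤ Real.sinh (1/2) := by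
      rw [Real.abs_sinh]
      exact Real.sinh_le_sinh.2 (abs_le.2
        ⟨by linarith [Int.fract_nonneg x], by linarith [Int.fract_lt_one x]⟩)
    rw [abs_of_pos (by positivity : (0:ℝ) < 2 * Real.sinh (1/2)),
      div_le_iff₀ (by positivity)]
    linarith
  -- integrability
  have hfo : IntegrableOn f (Set.Ioc 0 1) := hint.mono_set Set.Ioc_subset_Icc_self
  have hI : ∀ x : ℝ, IntegrableOn (fun y => g (x - y) * f y) (Set.Ioc 0 1) := by
    intro x
    refine hfo.bdd_mul (c := 1/2) ?_ (ae_of_all _ fun y => ?_)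
    · exact (hgmeas.comp (measurable_const.sub measurable_id)).aestronglyMeasurable
    · simpa [Real.norm_eq_abs] using hgbdd (x - y)
  have hFeq : ∀ x, F x = ∫ y in Set.Ioc (0:ℝ) 1, g (x - y) * f y := by
    intro x
    rw [hF, intervalIntegral.integral_of_le zero_le_one]
  -- a.e. pointwise bound
  have hae : (fun y => c * f y)
      ≤ᵐ[volume.restrict (Set.Ioc (0:ℝ) 1)]
        (fun y => g (b - y) * f y - g (a - y) * f y) := by
    filter_upwards [ae_restrict_of_ae hf_nonneg, ae_restrict_of_ae hf_zero,
      ae_restrict_mem measurableSet_Ioc] with y hy1 hy2 hy3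
    by_cases hmem : y ∈ Set.Icc a b
    · simp [hy2 hmem]
    · have hd : c ≤ g (b - y) - g (a - y) := by
        rw [hg (b - y), hg (a - y)]
        exact key_bound a b ha hab hb y hy3 hmem
      nlinarith [mul_le_mul_of_nonneg_right hd hy1]
  have hmono : ∫ y in Set.Ioc (0:ℝ) 1, c * f y
      ≤ ∫ y in Set.Ioc (0:ℝ) 1, (g (b - y) * f y - g (a - y) * f y) :=
    integral_mono_ae (hfo.const_mul c) ((hI b).sub (hI a)) hae
  have hsub : ∫ y in Set.Ioc (0:ℝ) 1, (g (b - y) * f y - g (a - y) * f y)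
      = F b - F a := by
    rw [integral_sub (hI b) (hI a), hFeq a, hFeq b]
  have hcm : ∫ y in Set.Ioc (0:ℝ) 1, c * f y = c * ∫ y in Set.Ioc (0:ℝ) 1, f y :=
    integral_const_mul c f
  have hIf_nonneg : 0 ≤ ∫ y in Set.Ioc (0:ℝ) 1, f y :=
    integral_nonneg_of_ae (ae_restrict_of_ae hf_nonneg)
  have hkey : c * ∫ y in Set.Ioc (0:ℝ) 1, f y ≤ F b - F a := by
    rw [← hcm, ← hsub]; exact hmono
  have hres : volume.restrict (Set.Ioc (0:ℝ) 1) = volume.restrict (Set.Icc (0:ℝ) 1) :=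
    Measure.restrict_congr_set Ioc_ae_eq_Icc
  constructor
  · nlinarith
  · constructor
    · intro hEq
      have hIzero : ∫ y in Set.Ioc (0:ℝ) 1, f y = 0 := by nlinarith
      have := (integral_eq_zero_iff_of_nonneg_ae (ae_restrict_of_ae hf_nonneg) hfo).1 hIzero
      rw [← hres]
      filter_upwards [this] with y hy using hy
    · intro hzero
      have hz : ∀ᵐ y ∂(volume.restrict (Set.Ioc (0:ℝ) 1)), f y = 0 := by
        rw [hres]; exact hzero
      have hzero_int : ∀ x : ℝ, F x = 0 := by
        intro x
        rw [hFeq x]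
        rw [integral_congr_ae (g := fun _ => (0:ℝ))
          (by filter_upwards [hz] with y hy; simp [hy])]
        simp
      rw [hzero_int a, hzero_int b]
end

section
/- Define G : ℝ → ℝ by G(x) = cosh(fract(x) - 1/2) / (2 sinh(1/2)), where fract(x) = x - ⌊x⌋ is the fractional part. Let h : ℝ → ℝ be continuous and 1-periodic, and define u(x) = ∫_0^1 G(x-y) h(y) dy. Then u is twice differentiable on ℝ and satisfies u(x) - u''(x) = h(x) for every x ∈ ℝ. -/
open MeasureTheory Real

theorem periodic_greens_function_identity
    (G : ℝ → ℝ)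
    (hG : ∀ x, G x = Real.cosh (Int.fract x - 1/2) / (2 * Real.sinh (1/2)))
    (h : ℝ → ℝ) (hc : Continuous h) (hper : Function.Periodic h 1)
    (u : ℝ → ℝ)
    (hu : ∀ x, u x = ∫ y in (0:ℝ)..1, G (x - y) * h y) :
    ∃ u' u'' : ℝ → ℝ,
      (∀ x, HasDerivAt u (u' x) x) ∧
      (∀ x, HasDerivAt u' (u'' x) x) ∧
      (∀ x, u x - u'' x = h x) := by
  have hs : (0:ℝ) < Real.sinh (1/2) := Real.sinh_pos_iff.2 (by norm_num)
  set D : ℝ := 2 * Real.sinh (1/2) with hD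
  have hDne : D ≠ 0 := by positivity
  set FA : ℝ → ℝ := fun t => ∫ y in (0:ℝ)..t, Real.cosh y * h y with hFAdef
  set FB : ℝ → ℝ := fun t => ∫ y in (0:ℝ)..t, Real.sinh y * h y with hFBdef
  have hFA : ∀ t : ℝ, HasDerivAt FA (Real.cosh t * h t) t := fun t =>
    ((Real.continuous_cosh.mul hc).integral_hasStrictDerivAt 0 t).hasDerivAt
  have hFB : ∀ t : ℝ, HasDerivAt FB (Real.sinh t * h t) t := fun t =>
    ((Real.continuous_sinh.mul hc).integral_hasStrictDerivAt 0 t).hasDerivAt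
  have hhx : ∀ x : ℝ, h (x - 1) = h x := fun x => hper.sub_eq x
  -- representation of u
  have hrep : ∀ x, u x = (Real.cosh (x - 1/2) * (FA x - FA (x-1))
      - Real.sinh (x - 1/2) * (FB x - FB (x-1))) / D := by
    intro x
    have hper' : Function.Periodic (fun y => G (x - y) * h y) 1 := by
      intro y
      have hGper : G (x - (y + 1)) = G (x - y) := by
        rw [hG, hG]
        have e : x - (y+1) = (x - y) - ((1:ℤ):ℝ) := by push_cast; ring
        rw [e, Int.fract_sub_intCast]
      simp only [hGper, hper y]
    have h2 : u x = ∫ y in (x-1)..x, G (x - y) * h y := by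
      rw [hu x]
      have := hper'.intervalIntegral_add_eq (x-1) 0
      simpa using this.symm
    have h3 : Set.EqOn (fun y => G (x - y) * h y)
        (fun y => (Real.cosh (x-1/2) * (Real.cosh y * h y)
          - Real.sinh (x-1/2) * (Real.sinh y * h y)) / D) (Set.uIcc (x-1) x) := by
      intro y hy
      rw [Set.uIcc_of_le (by linarith : x - 1 ≤ x)] at hy
      have h0 : 0 ≤ x - y := by linarith [hy.2]
      have h1' : x - y ≤ 1 := by linarith [hy.1]
      have hcosh : Real.cosh (Int.fract (x - y) - 1/2) = Real.cosh ((x - y) - 1/2) := by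
        rcases lt_or_eq_of_le h1' with hlt | heq
        · rw [Int.fract_eq_self.2 ⟨h0, hlt⟩]
        · rw [heq, Int.fract_one]
          rw [show (0:ℝ) - 1/2 = -(1/2) by ring, Real.cosh_neg]
          norm_num
      have hexp : Real.cosh ((x - y) - 1/2)
          = Real.cosh (x-1/2) * Real.cosh y - Real.sinh (x-1/2) * Real.sinh y := by
        rw [show (x - y) - 1/2 = (x - 1/2) - y by ring, Real.cosh_sub]
      simp only [hG, hcosh, hexp]
      ring
    rw [h2, intervalIntegral.integral_congr h3]
    have hiA : ∀ a b : ℝ, IntervalIntegrable (fun y => Real.cosh y * h y) volume a b :=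
      fun a b => (Real.continuous_cosh.mul hc).intervalIntegrable a b
    have hiB : ∀ a b : ℝ, IntervalIntegrable (fun y => Real.sinh y * h y) volume a b :=
      fun a b => (Real.continuous_sinh.mul hc).intervalIntegrable a b
    rw [intervalIntegral.integral_div,
      intervalIntegral.integral_sub ((hiA _ _).const_mul _) ((hiB _ _).const_mul _),
      intervalIntegral.integral_const_mul, intervalIntegral.integral_const_mul,
      ← intervalIntegral.integral_interval_sub_left (hiA 0 x) (hiA 0 (x-1)),
      ← intervalIntegral.integral_interval_sub_left (hiB 0 x) (hiB 0 (x-1))]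
  -- derivative helpers
  have hC : ∀ x : ℝ, HasDerivAt (fun x => Real.cosh (x-1/2)) (Real.sinh (x-1/2)) x := by
    intro x
    have := (Real.hasDerivAt_cosh (x-1/2)).comp x ((hasDerivAt_id x).sub_const (1/2))
    simpa [Function.comp_def] using this
  have hS : ∀ x : ℝ, HasDerivAt (fun x => Real.sinh (x-1/2)) (Real.cosh (x-1/2)) x := by
    intro x
    have := (Real.hasDerivAt_sinh (x-1/2)).comp x ((hasDerivAt_id x).sub_const (1/2))
    simpa [Function.comp_def] using this
  have hP : ∀ x : ℝ, HasDerivAt (fun x => FA x - FA (x-1))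
      (Real.cosh x * h x - Real.cosh (x-1) * h (x-1)) x := by
    intro x
    have h2 := (hFA (x-1)).comp x ((hasDerivAt_id x).sub_const 1)
    simpa [Function.comp_def, Pi.sub_def] using (hFA x).sub h2
  have hQ : ∀ x : ℝ, HasDerivAt (fun x => FB x - FB (x-1))
      (Real.sinh x * h x - Real.sinh (x-1) * h (x-1)) x := by
    intro x
    have h2 := (hFB (x-1)).comp x ((hasDerivAt_id x).sub_const 1)
    simpa [Function.comp_def, Pi.sub_def] using (hFB x).sub h2
  have hufun : u = fun x => (Real.cosh (x - 1/2) * (FA x - FA (x-1))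
      - Real.sinh (x - 1/2) * (FB x - FB (x-1))) / D := funext hrep
  refine ⟨fun x => (Real.sinh (x - 1/2) * (FA x - FA (x-1))
      - Real.cosh (x - 1/2) * (FB x - FB (x-1))) / D,
    fun x => u x - h x, fun x => ?_, fun x => ?_, fun x => by ring⟩
  · rw [hufun]
    have hv := (((hC x).mul (hP x)).sub ((hS x).mul (hQ x))).div_const D
    refine hv.congr_deriv (Eq.symm ?_)
    have key : Real.cosh (x-1/2) * (Real.cosh x - Real.cosh (x-1))
        - Real.sinh (x-1/2) * (Real.sinh x - Real.sinh (x-1)) = 0 := by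
      have e1 := Real.cosh_sub (x-1/2) x
      have e2 := Real.cosh_sub (x-1/2) (x-1)
      rw [show x - 1/2 - x = -(1/2) by ring, Real.cosh_neg] at e1
      rw [show x - 1/2 - (x-1) = 1/2 by ring] at e2
      linarith
    have hx1 := hhx x
    linear_combination ((-(h x)) * key
      + (Real.cosh (x-1/2) * Real.cosh (x-1) - Real.sinh (x-1/2) * Real.sinh (x-1)) * hx1) / D
  · have hv := (((hS x).mul (hP x)).sub ((hC x).mul (hQ x))).div_const D
    refine hv.congr_deriv (Eq.symm ?_)
    have key2 : Real.sinh (x-1/2) * (Real.cosh x - Real.cosh (x-1))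
        - Real.cosh (x-1/2) * (Real.sinh x - Real.sinh (x-1)) = -D := by
      have e1 := Real.sinh_sub (x-1/2) x
      have e2 := Real.sinh_sub (x-1/2) (x-1)
      rw [show x - 1/2 - x = -(1/2) by ring, Real.sinh_neg] at e1
      rw [show x - 1/2 - (x-1) = 1/2 by ring] at e2
      rw [hD]; linarith
    have hx1 := hhx x
    show u x - h x = _
    rw [hrep x, eq_div_iff hDne, sub_mul, div_mul_cancel₀ _ hDne]
    linear_combination (-(h x)) * key2
      + (Real.sinh (x-1/2) * Real.cosh (x-1) - Real.cosh (x-1/2) * Real.sinh (x-1)) * hx1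
end

section
/- Define g : ℝ → ℝ by g(x) = sinh(fract(x) - 1/2) / (2 sinh(1/2)), where fract(x) = x - ⌊x⌋ is the fractional part. Let u : ℝ → ℝ be continuously differentiable and 1-periodic. Let a, b ∈ ℝ with 0 < a < b < 1, suppose u(x) = 0 for every x ∈ [a,b], and suppose F(a) = F(b), where F(x) = ∫_0^1 g(x-y) (u(y)² + (1/2) u'(y)²) dy. Then u(x) = 0 for every x ∈ ℝ. -/
open MeasureTheory Real

theorem periodic_CH_unique_continuation_time_slice
    (g : ℝ → ℝ)
    (hg : ∀ x, g x = Real.sinh (Int.fract x - 1/2) / (2 * Real.sinh (1/2)))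
    (u : ℝ → ℝ) (hu : ContDiff ℝ 1 u) (hper : Function.Periodic u 1)
    (a b : ℝ) (ha : 0 < a) (hab : a < b) (hb : b < 1)
    (hu_zero : ∀ x ∈ Set.Icc a b, u x = 0)
    (F : ℝ → ℝ)
    (hF : ∀ x, F x = ∫ y in (0:ℝ)..1, g (x - y) * (u y ^ 2 + (1/2) * deriv u y ^ 2))
    (hFab : F a = F b) :
    ∀ x : ℝ, u x = 0 := by
  have hs : (0:ℝ) < Real.sinh (1/2) := Real.sinh_pos_iff.mpr (by norm_num)
  set f : ℝ → ℝ := fun y => u y ^ 2 + (1/2) * deriv u y ^ 2 with hf_def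
  have hfc : Continuous f := by
    have h1 : Continuous u := hu.continuous
    have h2 : Continuous (deriv u) := hu.continuous_deriv le_rfl
    fun_prop
  have hf0 : ∀ y, 0 ≤ f y := by intro y; simp only [hf_def]; positivity
  -- f vanishes on [a,b]
  have hderiv0 : ∀ y ∈ Set.Ioo a b, deriv u y = 0 := by
    intro y hy
    have hev : u =ᶠ[nhds y] (fun _ => (0:ℝ)) :=
      Filter.eventually_of_mem (isOpen_Ioo.mem_nhds hy)
        (fun z hz => hu_zero z (Set.Ioo_subset_Icc_self hz))
    rw [hev.deriv_eq]; simp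
  have hfz_Ioo : Set.EqOn f (fun _ => (0:ℝ)) (Set.Ioo a b) := by
    intro y hy
    simp only [hf_def, hu_zero y (Set.Ioo_subset_Icc_self hy), hderiv0 y hy]
    ring
  have hfz : ∀ y ∈ Set.Icc a b, f y = 0 := by
    have := hfz_Ioo.closure hfc continuous_const
    rw [closure_Ioo hab.ne] at this
    exact this
  -- bound on g
  have hgb : ∀ t, |g t| ≤ 1/2 := by
    intro t
    rw [hg t, abs_div, Real.abs_sinh,
      abs_of_pos (show (0:ℝ) < 2 * Real.sinh (1/2) by positivity)]
    rw [div_le_iff₀ (by positivity)]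
    have h1 : |Int.fract t - 1/2| ≤ 1/2 := by
      have := Int.fract_nonneg t
      have := Int.fract_lt_one t
      rw [abs_le]; constructor <;> linarith
    have h2 : Real.sinh |Int.fract t - 1/2| ≤ Real.sinh (1/2) :=
      Real.sinh_le_sinh.mpr h1
    nlinarith
  have hgm : Measurable g := by
    have hgeq : g = fun t : ℝ =>
        Real.sinh (Int.fract t - 1/2) / (2 * Real.sinh (1/2)) := funext hg
    rw [hgeq]
    exact (Real.continuous_sinh.measurable.comp
      (measurable_fract.sub measurable_const)).div_const _
  -- bound on f on [0,1]
  obtain ⟨M, hM⟩ := isCompact_Icc.exists_bound_of_continuousOn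
    (s := Set.Icc (0:ℝ) 1) hfc.continuousOn
  -- integrability
  have hint : ∀ x : ℝ, IntegrableOn (fun y => g (x - y) * f y) (Set.Ioc (0:ℝ) 1) := by
    intro x
    apply Measure.integrableOn_of_bounded (M := (1/2) * M) measure_Ioc_lt_top.ne
    · exact ((hgm.comp (measurable_const.sub measurable_id)).mul
        hfc.measurable).aestronglyMeasurable
    · refine (ae_restrict_iff' measurableSet_Ioc).mpr (Filter.Eventually.of_forall ?_)
      intro y hy
      have h1 : ‖f y‖ ≤ M := hM y (Set.Ioc_subset_Icc_self hy)
      have h2 : |g (x - y)| ≤ 1/2 := hgb _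
      calc ‖g (x - y) * f y‖ = |g (x - y)| * ‖f y‖ := by
            rw [Real.norm_eq_abs, Real.norm_eq_abs, abs_mul]
        _ ≤ (1/2) * M := mul_le_mul h2 h1 (norm_nonneg _) (by norm_num)
  have hii : ∀ x : ℝ, IntervalIntegrable (fun y => g (x - y) * f y) volume 0 1 :=
    fun x => (intervalIntegrable_iff_integrableOn_Ioc_of_le zero_le_one).mpr (hint x)
  -- the key integral vanishes
  set φ : ℝ → ℝ := fun y => (g (b - y) - g (a - y)) * f y with hφ_def
  have hkey : ∫ y in Set.Ioc (0:ℝ) 1, φ y = 0 := by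
    have h1 : ∫ y in (0:ℝ)..1, φ y
        = (∫ y in (0:ℝ)..1, g (b - y) * f y) - ∫ y in (0:ℝ)..1, g (a - y) * f y := by
      rw [← intervalIntegral.integral_sub (hii b) (hii a)]
      apply intervalIntegral.integral_congr
      intro y _
      simp only [hφ_def]; ring
    have h2 : ∫ y in (0:ℝ)..1, φ y = 0 := by
      rw [h1]
      rw [hF a, hF b] at hFab
      simp only [hf_def]
      exact sub_eq_zero.mpr hFab.symm
    rw [← intervalIntegral.integral_of_le zero_le_one, h2]
  have hφint : IntegrableOn φ (Set.Ioc (0:ℝ) 1) := by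
    refine ((hint b).sub (hint a)).congr (Filter.Eventually.of_forall fun y => ?_)
    simp only [Pi.sub_apply, hφ_def]; ring
  -- positivity of the kernel
  have hpos0a : ∀ y ∈ Set.Icc (0:ℝ) a, 0 < g (b - y) - g (a - y) := by
    intro y hy
    obtain ⟨hy0, hya⟩ := hy
    have hfa : Int.fract (a - y) = a - y :=
      Int.fract_eq_self.mpr ⟨by linarith, by linarith⟩
    have hfb : Int.fract (b - y) = b - y :=
      Int.fract_eq_self.mpr ⟨by linarith, by linarith⟩
    rw [hg (b - y), hg (a - y), hfa, hfb, div_sub_div_same]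
    apply div_pos ?_ (by positivity)
    have : Real.sinh (a - y - 1/2) < Real.sinh (b - y - 1/2) :=
      Real.sinh_lt_sinh.mpr (by linarith)
    linarith
  have hposb1 : ∀ y ∈ Set.Ioc b 1, 0 < g (b - y) - g (a - y) := by
    intro y hy
    obtain ⟨hyb, hy1⟩ := hy
    have hfa : Int.fract (a - y) = a - y + 1 := by
      have h1 : Int.fract (a - y) = Int.fract (a - y + 1) := by
        rw [show (1:ℝ) = ((1:ℤ):ℝ) by norm_num, Int.fract_add_intCast]
      rw [h1, Int.fract_eq_self.mpr ⟨by linarith, by linarith⟩]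
    have hfb : Int.fract (b - y) = b - y + 1 := by
      have h1 : Int.fract (b - y) = Int.fract (b - y + 1) := by
        rw [show (1:ℝ) = ((1:ℤ):ℝ) by norm_num, Int.fract_add_intCast]
      rw [h1, Int.fract_eq_self.mpr ⟨by linarith, by linarith⟩]
    rw [hg (b - y), hg (a - y), hfa, hfb, div_sub_div_same]
    apply div_pos ?_ (by positivity)
    have : Real.sinh (a - y + 1 - 1/2) < Real.sinh (b - y + 1 - 1/2) :=
      Real.sinh_lt_sinh.mpr (by linarith)
    linarith
  -- nonnegativity of φ on (0,1]
  have hnonneg : ∀ y ∈ Set.Ioc (0:ℝ) 1, 0 ≤ φ y := by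
    intro y hy
    obtain ⟨hy0, hy1⟩ := hy
    rcases le_or_gt y a with h | h
    · exact mul_nonneg (hpos0a y ⟨hy0.le, h⟩).le (hf0 y)
    · rcases le_or_gt y b with h' | h'
      · simp only [hφ_def, hfz y ⟨h.le, h'⟩, mul_zero, le_refl]
      · exact mul_nonneg (hposb1 y ⟨h', hy1⟩).le (hf0 y)
  -- φ is a.e. zero on (0,1]
  have hnull : volume ({y | φ y ≠ 0} ∩ Set.Ioc (0:ℝ) 1) = 0 := by
    have hnn : 0 ≤ᵐ[volume.restrict (Set.Ioc (0:ℝ) 1)] φ :=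
      (ae_restrict_iff' measurableSet_Ioc).mpr (Filter.Eventually.of_forall hnonneg)
    have hae : φ =ᵐ[volume.restrict (Set.Ioc (0:ℝ) 1)] 0 :=
      (integral_eq_zero_iff_of_nonneg_ae hnn hφint).mp hkey
    have h0 : volume.restrict (Set.Ioc (0:ℝ) 1) {y | ¬ φ y = 0} = 0 := by
      have := ae_iff.mp hae
      simpa using this
    rw [Measure.restrict_apply' measurableSet_Ioc] at h0
    simpa using h0
  -- continuity of g away from integers
  have hgca : ∀ t : ℝ, t ≠ (⌊t⌋ : ℝ) → ContinuousAt g t := by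
    intro t ht
    have hgeq : g = fun x => Real.sinh (Int.fract x - 1/2) / (2 * Real.sinh (1/2)) :=
      funext hg
    rw [hgeq]
    exact (Real.continuous_sinh.continuousAt.comp
      ((continuousAt_fract ht).sub continuousAt_const)).div_const _
  have hne : ∀ t : ℝ, 0 < |t| → |t| < 1 → t ≠ (⌊t⌋ : ℝ) := by
    intro t h0 h1 heq
    have h2 : -1 < (⌊t⌋:ℝ) ∧ (⌊t⌋:ℝ) < 1 := by rw [← heq]; exact abs_lt.mp h1
    have h3 : -1 < ⌊t⌋ ∧ ⌊t⌋ < 1 := by exact_mod_cast h2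
    have h4 : ⌊t⌋ = 0 := by omega
    rw [h4] at heq
    simp only [Int.cast_zero] at heq
    rw [heq] at h0
    simp at h0
  -- f vanishes outside [a,b] in (0,1)
  have hfout : ∀ y₀ ∈ Set.Ioo (0:ℝ) a ∪ Set.Ioo b 1, f y₀ = 0 := by
    intro y₀ hy₀
    by_contra hne0
    have hfpos : 0 < f y₀ := lt_of_le_of_ne (hf0 y₀) (Ne.symm hne0)
    have hker : 0 < g (b - y₀) - g (a - y₀) := by
      rcases hy₀ with h | h
      · exact hpos0a y₀ ⟨h.1.le, h.2.le⟩
      · exact hposb1 y₀ ⟨h.1, h.2.le⟩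
    have habs : 0 < |a - y₀| ∧ |a - y₀| < 1 ∧ 0 < |b - y₀| ∧ |b - y₀| < 1 := by
      rcases hy₀ with ⟨h1, h2⟩ | ⟨h1, h2⟩
      · rw [abs_of_pos (by linarith), abs_of_pos (by linarith)]
        exact ⟨by linarith, by linarith, by linarith, by linarith⟩
      · rw [abs_of_neg (by linarith), abs_of_neg (by linarith)]
        exact ⟨by linarith, by linarith, by linarith, by linarith⟩
    obtain ⟨hA0, hA1, hB0, hB1⟩ := habs
    have hca : ContinuousAt φ y₀ := by
      have hcb : ContinuousAt (fun y => g (b - y)) y₀ :=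
        (hgca _ (hne _ hB0 hB1)).comp (continuousAt_const.sub continuousAt_id)
      have hca' : ContinuousAt (fun y => g (a - y)) y₀ :=
        (hgca _ (hne _ hA0 hA1)).comp (continuousAt_const.sub continuousAt_id)
      exact (hcb.sub hca').mul hfc.continuousAt
    have hφpos : 0 < φ y₀ := mul_pos hker hfpos
    have hev : ∀ᶠ y in nhds y₀, 0 < φ y := hca.eventually (eventually_gt_nhds hφpos)
    have hmem : ∀ᶠ y in nhds y₀, y ∈ Set.Ioc (0:ℝ) 1 := by
      have hU : (Set.Ioo (0:ℝ) a ∪ Set.Ioo b 1) ∈ nhds y₀ :=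
        (isOpen_Ioo.union isOpen_Ioo).mem_nhds hy₀
      refine Filter.eventually_of_mem hU (fun y hy => ?_)
      rcases hy with ⟨h1, h2⟩ | ⟨h1, h2⟩
      · exact ⟨h1, by linarith⟩
      · exact ⟨by linarith, h2.le⟩
    have hev2 : ∀ᶠ y in nhds y₀, y ∈ {y | φ y ≠ 0} ∩ Set.Ioc (0:ℝ) 1 :=
      (hev.and hmem).mono (fun y hy => ⟨ne_of_gt hy.1, hy.2⟩)
    obtain ⟨V, hV1, hV2, hV3⟩ := eventually_nhds_iff.mp hev2
    have hle : volume V ≤ 0 := hnull ▸ measure_mono (fun y hy => hV1 y hy)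
    exact hV2.measure_ne_zero volume ⟨y₀, hV3⟩ (le_antisymm hle zero_le)
  -- f vanishes on all of [0,1]
  have hfIcc : ∀ y ∈ Set.Icc (0:ℝ) 1, f y = 0 := by
    have hL : ∀ y ∈ Set.Icc (0:ℝ) a, f y = 0 := by
      have heq : Set.EqOn f (fun _ => (0:ℝ)) (Set.Ioo (0:ℝ) a) :=
        fun y hy => hfout y (Or.inl hy)
      have := heq.closure hfc continuous_const
      rw [closure_Ioo ha.ne] at this
      exact this
    have hR : ∀ y ∈ Set.Icc b 1, f y = 0 := by
      have heq : Set.EqOn f (fun _ => (0:ℝ)) (Set.Ioo b 1) :=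
        fun y hy => hfout y (Or.inr hy)
      have := heq.closure hfc continuous_const
      rw [closure_Ioo hb.ne] at this
      exact this
    intro y hy
    rcases le_or_gt y a with h | h
    · exact hL y ⟨hy.1, h⟩
    · rcases le_or_gt y b with h' | h'
      · exact hfz y ⟨h.le, h'⟩
      · exact hR y ⟨h'.le, hy.2⟩
  -- conclude
  have huIcc : ∀ y ∈ Set.Icc (0:ℝ) 1, u y = 0 := by
    intro y hy
    have h0 := hfIcc y hy
    simp only [hf_def] at h0
    nlinarith [sq_nonneg (u y), sq_nonneg (deriv u y)]
  intro x
  have h2 : u (Int.fract x) = u x := by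
    have h1 := hper.sub_int_mul_eq (x := x) ⌊x⌋
    rw [mul_one, Int.self_sub_floor] at h1
    exact h1
  rw [← h2]
  exact huIcc _ ⟨Int.fract_nonneg x, (Int.fract_lt_one x).le⟩
end

section
/- Let c ∈ ℝ and define u : ℝ × ℝ → ℝ by u(x,t) = c e^{-|x-ct|}, and p : ℝ × ℝ → ℝ by p(x,t) = (3c²/4) ∫_ℝ e^{-|x-y|} e^{-2|y-ct|} dy. Then for every (x,t) with x ≠ ct: the partial derivative of u with respect to t at (x,t) equals c² sgn(x-ct) e^{-|x-ct|}; the partial derivative of u with respect to x at (x,t) equals -c sgn(x-ct) e^{-|x-ct|}; p is differentiable in x at (x,t); and ∂_t u(x,t) + u(x,t) ∂_x u(x,t) + ∂_x p(x,t) = 0. -/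
open MeasureTheory Real
open Set

lemma expInt_Ioi (a : ℝ) {b : ℝ} (hb : 0 < b) :
    ∫ y in Ioi a, Real.exp (-(b * y)) = Real.exp (-(b * a)) / b := by
  have h := MeasureTheory.integral_comp_mul_left_Ioi (fun x => Real.exp (-x)) a hb
  simp only [smul_eq_mul] at h
  rw [h, integral_exp_neg_Ioi]
  field_simp

lemma expInt_Iic (a : ℝ) {b : ℝ} (hb : 0 < b) :
    ∫ y in Iic a, Real.exp (b * y) = Real.exp (b * a) / b := by
  have h := integral_comp_neg_Iic a (fun x => Real.exp (-(b * x)))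
  simp only [mul_neg, neg_neg] at h
  rw [h, expInt_Ioi _ hb]
  ring_nf

lemma expIntOn_Iic (a : ℝ) {b : ℝ} (hb : 0 < b) :
    IntegrableOn (fun y : ℝ => Real.exp (b * y)) (Iic a) := by
  rw [← (Measure.measurePreserving_neg (volume : Measure ℝ)).integrableOn_comp_preimage
      (Homeomorph.neg ℝ).measurableEmbedding]
  simp only [Function.comp_def, neg_preimage, neg_Iic, mul_neg]
  rw [integrableOn_Ici_iff_integrableOn_Ioi]
  simpa only [neg_mul] using exp_neg_integrableOn_Ioi (-a) hb

lemma integrable_exp_two_abs : Integrable (fun y : ℝ => Real.exp (-2 * |y|)) := by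
  rw [← integrableOn_univ, ← Iic_union_Ioi (a := (0:ℝ)), integrableOn_union]
  constructor
  · refine (expIntOn_Iic 0 (b := 2) two_pos).congr_fun (fun y hy => ?_) measurableSet_Iic
    rw [abs_of_nonpos hy]; ring_nf
  · refine ((exp_neg_integrableOn_Ioi 0 two_pos)).congr_fun (fun y hy => ?_) measurableSet_Ioi
    rw [abs_of_pos hy]

lemma integrable_peakon (s : ℝ) :
    Integrable (fun y : ℝ => Real.exp (-|s - y|) * Real.exp (-2 * |y|)) := by
  refine integrable_exp_two_abs.mono' ?_ ?_
  · exact (Continuous.mul (by continuity) (by continuity)).aestronglyMeasurable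
  · filter_upwards with y
    rw [Real.norm_eq_abs, abs_of_nonneg (by positivity)]
    calc Real.exp (-|s - y|) * Real.exp (-2 * |y|)
        ≤ 1 * Real.exp (-2 * |y|) := by
          gcongr
          exact exp_le_one_iff.2 (by simp [neg_nonpos, abs_nonneg])
      _ = Real.exp (-2 * |y|) := one_mul _

lemma key_integral (s : ℝ) :
    (∫ y : ℝ, Real.exp (-|s - y|) * Real.exp (-2 * |y|))
      = 4/3 * Real.exp (-|s|) - 2/3 * Real.exp (-2 * |s|) := by
  have main : ∀ s : ℝ, 0 ≤ s →
      (∫ y : ℝ, Real.exp (-|s - y|) * Real.exp (-2 * |y|))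
        = 4/3 * Real.exp (-s) - 2/3 * Real.exp (-2 * s) := by
    intro s hs
    have hf := integrable_peakon s
    have hA : (∫ y in Iic (0:ℝ), Real.exp (-|s - y|) * Real.exp (-2 * |y|))
        = Real.exp (-s) * (1/3) := by
      rw [setIntegral_congr_fun measurableSet_Iic
        (g := fun y => Real.exp (-s) * Real.exp (3 * y)) ?_]
      · rw [integral_const_mul, expInt_Iic 0 (by norm_num : (0:ℝ) < 3)]
        norm_num
      · intro y hy
        simp only [mem_Iic] at hy
        dsimp only
        rw [abs_of_nonpos hy, abs_of_nonneg (by linarith : (0:ℝ) ≤ s - y),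
          ← Real.exp_add, ← Real.exp_add]
        congr 1; ring
    have hB : (∫ y in Ioc (0:ℝ) s, Real.exp (-|s - y|) * Real.exp (-2 * |y|))
        = Real.exp (-s) * (1 - Real.exp (-s)) := by
      rw [setIntegral_congr_fun measurableSet_Ioc
        (g := fun y => Real.exp (-s) * Real.exp (-y)) ?_]
      · rw [integral_const_mul, ← intervalIntegral.integral_of_le hs,
          intervalIntegral.integral_comp_neg (fun x => Real.exp x),
          integral_exp]
        simp
      · intro y hy
        simp only [mem_Ioc] at hy
        dsimp only
        rw [abs_of_pos hy.1, abs_of_nonneg (by linarith : (0:ℝ) ≤ s - y),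
          ← Real.exp_add, ← Real.exp_add]
        congr 1; ring
    have hC : (∫ y in Ioi s, Real.exp (-|s - y|) * Real.exp (-2 * |y|))
        = Real.exp s * (Real.exp (-(3 * s)) / 3) := by
      rw [setIntegral_congr_fun measurableSet_Ioi
        (g := fun y => Real.exp s * Real.exp (-(3 * y))) ?_]
      · rw [integral_const_mul, expInt_Ioi s (by norm_num : (0:ℝ) < 3)]
      · intro y hy
        simp only [mem_Ioi] at hy
        dsimp only
        rw [abs_of_pos (by linarith : (0:ℝ) < y), abs_of_nonpos (by linarith : s - y ≤ 0),
          ← Real.exp_add, ← Real.exp_add]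
        congr 1; ring
    rw [← intervalIntegral.integral_Iic_add_Ioi hf.integrableOn hf.integrableOn,
      ← Ioc_union_Ioi_eq_Ioi hs,
      setIntegral_union (Ioc_disjoint_Ioi le_rfl) measurableSet_Ioi
        hf.integrableOn hf.integrableOn, hA, hB, hC]
    have e1 : Real.exp s * Real.exp (-(3 * s)) = Real.exp (-2 * s) := by
      rw [← Real.exp_add]; congr 1; ring
    have e2 : Real.exp (-s) * Real.exp (-s) = Real.exp (-2 * s) := by
      rw [← Real.exp_add]; congr 1; ring
    nlinarith [e1, e2]
  rcases le_or_gt 0 s with hs | hs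
  · rw [main s hs, abs_of_nonneg hs]
  · have h := main (-s) (by linarith)
    have h2 : (∫ y : ℝ, Real.exp (-|(-s) - y|) * Real.exp (-2 * |y|))
        = ∫ y : ℝ, Real.exp (-|s - y|) * Real.exp (-2 * |y|) := by
      rw [← integral_neg_eq_self (fun y => Real.exp (-|s - y|) * Real.exp (-2 * |y|))]
      congr 1; ext y
      rw [abs_neg, show s - -y = -((-s) - y) by ring, abs_neg]
    rw [← h2, h, abs_of_neg hs]

lemma hasDerivAt_abs_sign {s : ℝ} (hs : s ≠ 0) :
    HasDerivAt (fun y : ℝ => |y|) (Real.sign s) s := by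
  rcases hs.lt_or_gt with h | h
  · simpa [Real.sign_of_neg h] using hasDerivAt_abs_neg h
  · simpa [Real.sign_of_pos h] using hasDerivAt_abs_pos h

theorem peakon_solves_CH_off_crest
    (c : ℝ)
    (u : ℝ × ℝ → ℝ) (hu : ∀ x t, u (x, t) = c * Real.exp (-|x - c * t|))
    (p : ℝ × ℝ → ℝ)
    (hp : ∀ x t, p (x, t) =
      (3 * c ^ 2 / 4) * ∫ y : ℝ, Real.exp (-|x - y|) * Real.exp (-2 * |y - c * t|)) :
    ∀ x t : ℝ, x ≠ c * t →
      HasDerivAt (fun t' => u (x, t'))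
        (c ^ 2 * Real.sign (x - c * t) * Real.exp (-|x - c * t|)) t ∧
      HasDerivAt (fun x' => u (x', t))
        (-c * Real.sign (x - c * t) * Real.exp (-|x - c * t|)) x ∧
      ∃ px : ℝ, HasDerivAt (fun x' => p (x', t)) px x ∧
        c ^ 2 * Real.sign (x - c * t) * Real.exp (-|x - c * t|) +
          u (x, t) * (-c * Real.sign (x - c * t) * Real.exp (-|x - c * t|)) + px = 0 := by
  intro x t hxt
  have hs : x - c * t ≠ 0 := sub_ne_zero.2 hxt
  set σ : ℝ := Real.sign (x - c * t) with hσ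
  -- time derivative
  have h1 : HasDerivAt (fun t' : ℝ => x - c * t') (-c) t := by
    simpa using ((hasDerivAt_id t).const_mul c).const_sub x
  have h2 : HasDerivAt (fun t' : ℝ => |x - c * t'|) (σ * (-c)) t :=
    by have := (hasDerivAt_abs_sign hs).comp t h1; exact this
  have hut : HasDerivAt (fun t' => u (x, t'))
      (c ^ 2 * σ * Real.exp (-|x - c * t|)) t := by
    have h3 := (h2.neg.exp).const_mul c
    simp only [Pi.neg_apply] at h3
    simp only [hu]
    exact h3.congr_deriv (by ring)
  -- space derivative
  have g1 : HasDerivAt (fun x' : ℝ => x' - c * t) 1 x := by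
    simpa using (hasDerivAt_id x).sub_const (c * t)
  have g2 : HasDerivAt (fun x' : ℝ => |x' - c * t|) (σ * 1) x :=
    by have := (hasDerivAt_abs_sign hs).comp x g1; exact this
  have hux : HasDerivAt (fun x' => u (x', t))
      (-c * σ * Real.exp (-|x - c * t|)) x := by
    have g3 := (g2.neg.exp).const_mul c
    simp only [Pi.neg_apply] at g3
    simp only [hu]
    exact g3.congr_deriv (by ring)
  refine ⟨hut, hux, ?_⟩
  -- closed form for p
  have hpF : ∀ x' : ℝ, p (x', t)
      = c ^ 2 * Real.exp (-|x' - c * t|) - c ^ 2 / 2 * Real.exp (-2 * |x' - c * t|) := by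
    intro x'
    have htrans : (∫ y : ℝ, Real.exp (-|x' - y|) * Real.exp (-2 * |y - c * t|))
        = ∫ y : ℝ, Real.exp (-|(x' - c * t) - y|) * Real.exp (-2 * |y|) := by
      rw [← integral_add_right_eq_self
        (fun y => Real.exp (-|x' - y|) * Real.exp (-2 * |y - c * t|)) (c * t)]
      congr 1; ext y
      rw [add_sub_cancel_right, show x' - (y + c * t) = (x' - c * t) - y by ring]
    rw [hp, htrans, key_integral]
    ring
  -- derivative of p in x
  have e1 : HasDerivAt (fun x' : ℝ => c ^ 2 * Real.exp (-|x' - c * t|))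
      (c ^ 2 * (Real.exp (-|x - c * t|) * -(σ * 1))) x := (g2.neg.exp).const_mul (c ^ 2)
  have e2 : HasDerivAt (fun x' : ℝ => c ^ 2 / 2 * Real.exp (-2 * |x' - c * t|))
      (c ^ 2 / 2 * (Real.exp (-2 * |x - c * t|) * (-2 * (σ * 1)))) x :=
    ((g2.const_mul (-2)).exp).const_mul (c ^ 2 / 2)
  have hderiv : HasDerivAt (fun x' => p (x', t))
      (c ^ 2 * (Real.exp (-|x - c * t|) * -(σ * 1))
        - c ^ 2 / 2 * (Real.exp (-2 * |x - c * t|) * (-2 * (σ * 1)))) x := by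
    have : (fun x' => p (x', t))
        = fun x' => c ^ 2 * Real.exp (-|x' - c * t|)
            - c ^ 2 / 2 * Real.exp (-2 * |x' - c * t|) := funext fun x' => hpF x'
    rw [this]
    exact e1.sub e2
  refine ⟨_, hderiv, ?_⟩
  have hE : Real.exp (-|x - c * t|) * Real.exp (-|x - c * t|)
      = Real.exp (-2 * |x - c * t|) := by
    rw [← Real.exp_add]; congr 1; ring
  rw [hu]
  linear_combination (-(c ^ 2 * σ)) * hE
end
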